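/- Let L be a first-order language all of whose symbols are function symbols, with no nullary and no unary function symbols and only finitely many function symbols in total, let 𝔄 be an L-structure with underlying set A, let a : ℕ → A, and let n ∈ ℕ. If 𝔄 is Ramsey below a, then for every b ≤ a and every X ⊆ Aⁿ there exists c ≤ b such that [FR(c)]ⁿ_< is either contained in X or disjoint from X, where [FR(c)]ⁿ_< = { (t₁^𝔄[c], …, tₙ^𝔄[c]) : t₁, …, tₙ orderly terms with t₁ < ⋯ < tₙ }. -/

import Mathlib

open Function Set

universe u v w

/-- Terms of a purely functional first-order language whose function symbols
of arity `n` form the type `F n`, with variables indexed by `ℕ`. -/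
inductive Tm (F : ℕ → Type u) : Type u
  | var : ℕ → Tm F
  | func : {n : ℕ} → F n → (Fin n → Tm F) → Tm F

namespace Tm

variable {F : ℕ → Type u} {A : Type v} {β : Type w}

/-- The list of (indices of) variables occurring in a term, from left to right. -/
def varList : Tm F → List ℕ
  | .var i => [i]
  | .func (n := n) _ ts => (List.finRange n).flatMap fun i => (ts i).varList

/-- A term is *orderly* if the indices of the variables occurring in it,
read from left to right, are strictly increasing. -/
def Orderly (t : Tm F) : Prop := t.varList.Chain' (· < ·)

/-- `TermLT s t` iff the index of the last variable of `s` is less than the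
index of the first variable of `t`. -/
def TermLT (s t : Tm F) : Prop :=
  ∃ i j, s.varList.getLast? = some i ∧ t.varList.head? = some j ∧ i < j

/-- An infinite sequence of orderly terms is *admissible* iff it is increasing
with respect to `TermLT`. -/
def Admissible (ts : ℕ → Tm F) : Prop :=
  (∀ i, (ts i).Orderly) ∧ ∀ i, TermLT (ts i) (ts (i + 1))

/-- `s.subst σ` replaces each variable `vᵢ` in `s` by `σ i`. -/
def subst (σ : ℕ → Tm F) : Tm F → Tm F
  | .var i => σ i
  | .func f ts => .func f fun i => (ts i).subst σ

/-- Interpretation of a term in a structure with underlying set `A` whose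
interpretation of the function symbols is `I`, under the assignment `a`. -/
def realize (I : ∀ n, F n → (Fin n → A) → A) (a : ℕ → A) : Tm F → A
  | .var i => a i
  | .func (n := n) f ts => I n f fun i => (ts i).realize I a

end Tm

section General

variable {F : ℕ → Type u} {A : Type v} {β : Type w}

/-- `b` is a reduction of `a` (with respect to the algebra `(A, I)`). -/
def SeqReduction (I : ∀ n, F n → (Fin n → A) → A) (b a : ℕ → A) : Prop :=
  ∃ ts : ℕ → Tm F, Tm.Admissible ts ∧ ∀ i, b i = (ts i).realize I a

/-- The set of finite reductions of `a`. -/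
def FR (I : ∀ n, F n → (Fin n → A) → A) (a : ℕ → A) : Set A :=
  { x | ∃ t : Tm F, t.Orderly ∧ x = t.realize I a }

/-- `(A, I)` is a Ramsey algebra. -/
def RamseyAlg (I : ∀ n, F n → (Fin n → A) → A) : Prop :=
  ∀ (a : ℕ → A) (X : Set A),
    ∃ b, SeqReduction I b a ∧ (FR I b ⊆ X ∨ FR I b ∩ X = ∅)

/-- `(A, I)` is Ramsey below `a`. -/
def RamseyBelow (I : ∀ n, F n → (Fin n → A) → A) (a : ℕ → A) : Prop :=
  ∀ b, SeqReduction I b a → ∀ X : Set A,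
    ∃ c, SeqReduction I c b ∧ (FR I c ⊆ X ∨ FR I c ∩ X = ∅)

/-- An increasing tuple `t₁ < t₂ < ⋯ < tₙ` of orderly terms. -/
def OrdTuple {n : ℕ} (t : Fin n → Tm F) : Prop :=
  (∀ i, (t i).Orderly) ∧ ∀ i j : Fin n, i < j → Tm.TermLT (t i) (t j)

/-- `𝒜` (as a function on orderly terms) is an orderly algebra. -/
def IsOrderlyAlg (𝒜 : Tm F → β) : Prop :=
  ∀ (n : ℕ) (f : F n) (t t' : Fin n → Tm F), OrdTuple t → OrdTuple t' →
    (∀ k, 𝒜 (t k) = 𝒜 (t' k)) → 𝒜 (.func f t) = 𝒜 (.func f t')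

/-- The universe of an orderly algebra: its range on orderly terms. -/
def OAUniv (𝒜 : Tm F → β) : Set β := 𝒜 '' { t | t.Orderly }

/-- `ℬ` is a reduction of the orderly algebra `𝒜` (as functions on orderly terms). -/
def OAReduction (ℬ 𝒜 : Tm F → β) : Prop :=
  ∃ ts : ℕ → Tm F, Tm.Admissible ts ∧ ∀ s : Tm F, s.Orderly → ℬ s = 𝒜 (s.subst ts)

/-- `ℬ` is homogeneous for `X`. -/
def Homog (ℬ : Tm F → β) (X : Set β) : Prop :=
  OAUniv ℬ ⊆ X ∨ OAUniv ℬ ∩ X = ∅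

/-- An orderly algebra is weakly Ramsey. -/
def WeaklyRamseyOA (𝒜 : Tm F → β) : Prop :=
  ∀ X ⊆ OAUniv 𝒜, ∃ ℬ, OAReduction ℬ 𝒜 ∧ Homog ℬ X

/-- An orderly algebra is Ramsey. -/
def RamseyOA (𝒜 : Tm F → β) : Prop :=
  ∀ ℬ, OAReduction ℬ 𝒜 → ∀ X ⊆ OAUniv 𝒜, ∃ 𝒞, OAReduction 𝒞 ℬ ∧ Homog 𝒞 X

/-- The orderly algebra induced from the algebra `(A, I)` by the sequence `a`. -/
def inducedOA (I : ∀ n, F n → (Fin n → A) → A) (a : ℕ → A) : Tm F → A :=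
  fun t => t.realize I a

/-- `[FR(c)]ⁿ_<` : increasing `n`-tuples of finite reductions of `c`. -/
def FRtuple (I : ∀ n, F n → (Fin n → A) → A) (n : ℕ) (c : ℕ → A) : Set (Fin n → A) :=
  { x | ∃ t : Fin n → Tm F, OrdTuple t ∧ ∀ i, x i = (t i).realize I c }

/-- `‖𝒞‖ⁿ_<` for an orderly algebra `𝒞`. -/
def OATuple (n : ℕ) (𝒞 : Tm F → β) : Set (Fin n → β) :=
  { x | ∃ t : Fin n → Tm F, OrdTuple t ∧ ∀ i, x i = 𝒞 (t i) }

/-- The basic set `[n, a]` of the preorder with approximations `(ᵂA, ≤)`. -/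
def Approx (I : ∀ n, F n → (Fin n → A) → A) (n : ℕ) (a : ℕ → A) : Set (ℕ → A) :=
  { b | SeqReduction I b a ∧ ∀ i < n, b i = a i }

/-- The natural topology on `ᵂA`, generated by the sets `[n, a]`. -/
def natTop (I : ∀ n, F n → (Fin n → A) → A) : TopologicalSpace (ℕ → A) :=
  TopologicalSpace.generateFrom { S | ∃ n a, S = Approx I n a }

/-- A subset `X ⊆ ᵂA` is Ramsey. -/
def RamseySet (I : ∀ n, F n → (Fin n → A) → A) (X : Set (ℕ → A)) : Prop :=
  ∀ (n : ℕ) (a : ℕ → A), ∃ b ∈ Approx I n a,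
    Approx I n b ⊆ X ∨ Approx I n b ∩ X = ∅

/-- `X` has the property of Baire in the natural topology:
its symmetric difference with some open set is meager. -/
def HasBaireProperty (I : ∀ n, F n → (Fin n → A) → A) (X : Set (ℕ → A)) : Prop :=
  ∃ U : Set (ℕ → A), @IsOpen _ (natTop I) U ∧ @IsMeagre _ (natTop I) (symmDiff X U)

end General

/-- The language with a single binary function symbol. -/
inductive BinF : ℕ → Type
  | f : BinF 2

/-- Application of the binary function symbol: the term `f s t`. -/
def fapp (s t : Tm BinF) : Tm BinF := .func BinF.f ![s, t]

/-- The interpretation of the single binary function symbol by a binary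
operation `g` on `A`. -/
def binI {A : Type v} (g : A → A → A) : ∀ n, BinF n → (Fin n → A) → A
  | _, BinF.f, args => g (args 0) (args 1)

/-- The pair `(tˣ, tʸ)`: `(vᵢˣ, vᵢʸ) = (v_{2i}, v_{2i+1})` and
`((f s t)ˣ, (f s t)ʸ) = (f sˣ sʸ, f tˣ tʸ)`. -/
def xyPair : Tm BinF → Tm BinF × Tm BinF
  | .var i => (.var (2 * i), .var (2 * i + 1))
  | .func BinF.f ts =>
      (fapp (xyPair (ts 0)).1 (xyPair (ts 0)).2, fapp (xyPair (ts 1)).1 (xyPair (ts 1)).2)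

/-- The orderly algebra `♯𝒜`, `♯𝒜(t) = (𝒜(tˣ), 𝒜(tʸ))`. -/
def sharpOA {β : Type w} (𝒜 : Tm BinF → β) : Tm BinF → β × β :=
  fun t => (𝒜 (xyPair t).1, 𝒜 (xyPair t).2)
section AuxTm

namespace Tm

variable {F : ℕ → Type u} {A : Type v}

theorem realize_subst (I : ∀ n, F n → (Fin n → A) → A) (c : ℕ → A) (σ : ℕ → Tm F) :
    ∀ t : Tm F, (t.subst σ).realize I c = t.realize I (fun i => (σ i).realize I c) := by
  intro t
  induction t with
  | var i => rfl
  | func f ts ih =>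
    show I _ f _ = I _ f _
    congr 1; funext j; exact ih j

theorem varList_subst (σ : ℕ → Tm F) :
    ∀ t : Tm F, (t.subst σ).varList = t.varList.flatMap fun i => (σ i).varList := by
  intro t
  induction t with
  | var i => simp [subst, varList]
  | func f ts ih =>
    show ((List.finRange _).flatMap fun i => ((ts i).subst σ).varList) = _
    simp only [varList, List.flatMap_assoc]
    congr 1; funext j; exact ih j

theorem realize_congr (I : ∀ n, F n → (Fin n → A) → A) {c d : ℕ → A} :
    ∀ {t : Tm F}, (∀ v ∈ t.varList, c v = d v) → t.realize I c = t.realize I d := by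
  intro t
  induction t with
  | var i => intro h; exact h i (by simp [varList])
  | func f ts ih =>
    intro h
    show I _ f _ = I _ f _
    congr 1; funext j
    exact ih j fun v hv => h v (by
      simp only [varList, List.mem_flatMap]
      exact ⟨j, List.mem_finRange j, hv⟩)

theorem varList_ne_nil [IsEmpty (F 0)] : ∀ t : Tm F, t.varList ≠ [] := by
  intro t
  induction t with
  | var i => simp [varList]
  | func f ts ih =>
    rename_i n
    match n, f, ts, ih with
    | 0, f, _, _ => exact isEmptyElim f
    | (n+1), f, ts, ih =>
      have h0 : (ts 0).varList ≠ [] := ih 0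
      obtain ⟨v, hv⟩ := List.exists_mem_of_ne_nil _ h0
      intro hnil
      have : v ∈ (Tm.func f ts).varList := by
        simp only [varList, List.mem_flatMap]
        exact ⟨0, List.mem_finRange _, hv⟩
      rw [hnil] at this
      exact List.not_mem_nil this

end Tm

end AuxTm
section AuxList

theorem aux_head?_flatMap {α β : Type*} (f : α → List β) :
    ∀ (l : List α), l ≠ [] → (∀ i ∈ l, f i ≠ []) →
      ∀ h : l ≠ [], (l.flatMap f).head? = (f (l.head h)).head?
  | [], h, _, _ => absurd rfl h
  | a :: l, _, hf, h => by
    simp only [List.flatMap_cons, List.head_cons]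
    exact List.head?_append_of_ne_nil _ (hf a (by simp))

theorem aux_getLast?_flatMap {α β : Type*} (f : α → List β) :
    ∀ (l : List α), (∀ i ∈ l, f i ≠ []) →
      ∀ h : l ≠ [], (l.flatMap f).getLast? = (f (l.getLast h)).getLast? := by
  intro l
  induction l with
  | nil => intro _ h; exact absurd rfl h
  | cons a l ih =>
    intro hf h
    cases l with
    | nil => simp
    | cons b l =>
      rw [List.flatMap_cons, List.getLast?_append_of_ne_nil]
      · rw [ih (fun i hi => hf i (by simp [hi])) (by simp)]
        congr 1
      · intro hnil
        have : f b ≠ [] := hf b (by simp)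
        have hb : (f b).head? ≠ none := by
          cases hfb : (f b).head? with
          | none => exact absurd (List.head?_eq_none_iff.mp hfb) this
          | some x => simp
        have h3 := aux_head?_flatMap f (b :: l) (by simp) (fun i hi => hf i (by simp [hi])) (by simp)
        rw [hnil] at h3
        exact hb (by simpa using h3.symm)

theorem aux_chain'_flatMap {α : Type*} (f : α → List ℕ) :
    ∀ (l : List α), (∀ i ∈ l, f i ≠ []) → (∀ i ∈ l, (f i).Chain' (· < ·)) →
      l.Chain' (fun i j => ∀ x ∈ (f i).getLast?, ∀ y ∈ (f j).head?, x < y) →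
      (l.flatMap f).Chain' (· < ·) := by
  intro l
  induction l with
  | nil => intro _ _ _; exact List.isChain_nil
  | cons a l ih =>
    intro hne hch hl
    cases l with
    | nil => simpa using hch a (by simp)
    | cons b l =>
      rw [List.flatMap_cons]
      apply List.isChain_append.mpr
      refine ⟨hch a (by simp), ih (fun i hi => hne i (by simp [hi]))
        (fun i hi => hch i (by simp [hi])) (List.isChain_cons_cons.mp hl).2, ?_⟩
      intro x hx y hy
      rw [aux_head?_flatMap f (b :: l) (by simp) (fun i hi => hne i (by simp [hi])) (by simp)] at hy
      exact (List.isChain_cons_cons.mp hl).1 x hx y (by simpa using hy)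

theorem aux_head_le_getLast {l : List ℕ} (hc : l.Chain' (· < ·)) (h : l ≠ []) :
    l.head h ≤ l.getLast h := by
  induction l with
  | nil => exact absurd rfl h
  | cons a l ih =>
    cases l with
    | nil => simp
    | cons b l =>
      have h2 := (List.isChain_cons_cons.mp hc).1
      have := ih (List.isChain_cons_cons.mp hc).2 (by simp)
      simp only [List.head_cons] at this ⊢
      rw [List.getLast_cons (by simp)]
      omega

theorem aux_mem_le_getLast {l : List ℕ} (hc : l.Chain' (· < ·)) (h : l ≠ []) :
    ∀ v ∈ l, v ≤ l.getLast h := by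
  induction l with
  | nil => exact absurd rfl h
  | cons a l ih =>
    intro v hv
    cases l with
    | nil => simp at hv; simp [hv]
    | cons b l =>
      rw [List.getLast_cons (by simp)]
      rcases List.mem_cons.mp hv with rfl | hv
      · have h2 := (List.isChain_cons_cons.mp hc).1
        have := aux_head_le_getLast (List.isChain_cons_cons.mp hc).2 (by simp)
        simp only [List.head_cons] at this
        omega
      · exact ih (List.isChain_cons_cons.mp hc).2 (by simp) v hv

theorem aux_head_le_mem {l : List ℕ} (hc : l.Chain' (· < ·)) (h : l ≠ []) :
    ∀ v ∈ l, l.head h ≤ v := by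
  induction l with
  | nil => exact absurd rfl h
  | cons a l ih =>
    intro v hv
    rcases List.mem_cons.mp hv with rfl | hv
    · simp
    cases l with
    | nil => simp at hv
    | cons b l =>
      have h2 := (List.isChain_cons_cons.mp hc).1
      have := ih (List.isChain_cons_cons.mp hc).2 (by simp) v hv
      simp only [List.head_cons] at this ⊢
      omega

theorem aux_flatMap_sublist {α β : Type*} (f : α → List β) {a : α} :
    ∀ {l : List α}, a ∈ l → List.Sublist (f a) (l.flatMap f) := by
  intro l
  induction l with
  | nil => simp
  | cons b l ih =>
    intro ha
    rw [List.flatMap_cons]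
    rcases List.mem_cons.mp ha with rfl | ha
    · exact List.sublist_append_left _ _
    · exact (ih ha).trans (List.sublist_append_right _ _)

end AuxList
section AuxOrd

namespace Tm

variable {F : ℕ → Type u} {A : Type v} [IsEmpty (F 0)]

theorem termLT_iff (s t : Tm F) :
    TermLT s t ↔ s.varList.getLast (varList_ne_nil s) < t.varList.head (varList_ne_nil t) := by
  constructor
  · rintro ⟨i, j, hi, hj, hij⟩
    rw [List.getLast?_eq_getLast (varList_ne_nil s)] at hi
    rw [List.head?_eq_head (varList_ne_nil t)] at hj
    cases Option.some.inj hi; cases Option.some.inj hj; exact hij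
  · intro h
    exact ⟨_, _, List.getLast?_eq_getLast (varList_ne_nil s), List.head?_eq_head (varList_ne_nil t), h⟩

theorem Orderly.sub {n : ℕ} {f : F n} {ts : Fin n → Tm F}
    (h : (Tm.func f ts).Orderly) (j : Fin n) : (ts j).Orderly := by
  have hs : List.Sublist (ts j).varList ((List.finRange n).flatMap fun i => (ts i).varList) :=
    aux_flatMap_sublist (fun i => (ts i).varList) (List.mem_finRange j)
  exact List.IsChain.sublist h hs

theorem admissible_lt {σ : ℕ → Tm F} (hσ : Tm.Admissible σ) :
    ∀ i j, i < j → TermLT (σ i) (σ j) := by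
  intro i j
  induction j with
  | zero => omega
  | succ j ih =>
    intro hij
    rcases Nat.lt_or_ge i j with h | h
    · have h1 := (termLT_iff _ _).mp (ih h)
      have h2 := (termLT_iff _ _).mp (hσ.2 j)
      have h3 := aux_head_le_getLast (hσ.1 j) (varList_ne_nil (σ j))
      exact (termLT_iff _ _).mpr (by omega)
    · have : i = j := by omega
      subst this; exact hσ.2 i

theorem head_varList_subst {σ : ℕ → Tm F} (t : Tm F) :
    ((t.subst σ).varList).head (varList_ne_nil _) =
      ((σ (t.varList.head (varList_ne_nil t))).varList).head (varList_ne_nil _) := by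
  have h := aux_head?_flatMap (fun i => (σ i).varList) t.varList (varList_ne_nil t)
    (fun i _ => varList_ne_nil _) (varList_ne_nil t)
  rw [← varList_subst] at h
  rw [List.head?_eq_head (varList_ne_nil _), List.head?_eq_head (varList_ne_nil _)] at h
  exact Option.some.inj h

theorem getLast_varList_subst {σ : ℕ → Tm F} (t : Tm F) :
    ((t.subst σ).varList).getLast (varList_ne_nil _) =
      ((σ (t.varList.getLast (varList_ne_nil t))).varList).getLast (varList_ne_nil _) := by
  have h := aux_getLast?_flatMap (fun i => (σ i).varList) t.varList
    (fun i _ => varList_ne_nil _) (varList_ne_nil t)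
  rw [← varList_subst] at h
  rw [List.getLast?_eq_getLast (varList_ne_nil _), List.getLast?_eq_getLast (varList_ne_nil _)] at h
  exact Option.some.inj h

theorem Orderly.subst {σ : ℕ → Tm F} (hσ : Tm.Admissible σ) {t : Tm F}
    (ht : t.Orderly) : (t.subst σ).Orderly := by
  show ((t.subst σ).varList).Chain' (· < ·)
  rw [varList_subst]
  apply aux_chain'_flatMap
  · exact fun i _ => varList_ne_nil _
  · exact fun i _ => hσ.1 i
  · apply List.IsChain.imp ?_ ht
    intro i j hij x hx y hy
    obtain ⟨p, q, hp, hq, hpq⟩ := hσ.2 i |> fun _ => admissible_lt hσ i j hij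
    rw [hp] at hx; rw [hq] at hy
    cases Option.mem_some_iff.mp hx; cases Option.mem_some_iff.mp hy
    exact hpq

theorem TermLT.subst {σ : ℕ → Tm F} (hσ : Tm.Admissible σ) {s t : Tm F}
    (hst : TermLT s t) : TermLT (s.subst σ) (t.subst σ) := by
  rw [termLT_iff] at hst ⊢
  rw [getLast_varList_subst, head_varList_subst]
  have h := (termLT_iff _ _).mp (admissible_lt hσ _ _ hst)
  have h1 := aux_mem_le_getLast (hσ.1 (s.varList.getLast (varList_ne_nil s))) (varList_ne_nil _)
  have h2 := aux_head_le_mem (hσ.1 (t.varList.head (varList_ne_nil t))) (varList_ne_nil _)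
  exact h

theorem Admissible.subst {σ ts : ℕ → Tm F} (hσ : Tm.Admissible σ) (hts : Tm.Admissible ts) :
    Tm.Admissible (fun i => (ts i).subst σ) :=
  ⟨fun i => (hts.1 i).subst hσ, fun i => (hts.2 i).subst hσ⟩

end Tm

end AuxOrd
section AuxShift

variable {F : ℕ → Type u} {A : Type v} [IsEmpty (F 0)]

theorem aux_chain'_map_sub {k : ℕ} :
    ∀ {l : List ℕ}, (∀ v ∈ l, k ≤ v) → l.Chain' (· < ·) → (l.map (· - k)).Chain' (· < ·) := by
  intro l
  induction l with
  | nil => intros; exact List.isChain_nil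
  | cons a l ih =>
    intro hb hc
    cases l with
    | nil => exact List.isChain_singleton _
    | cons b l =>
      rw [List.map_cons, List.map_cons, List.Chain', List.isChain_cons_cons]
      constructor
      · have ha := hb a (by simp)
        have hbb := hb b (by simp)
        have := (List.isChain_cons_cons.mp hc).1
        show a - k < b - k
        omega
      · show ((b :: l).map (· - k)).Chain' (· < ·)
        exact ih (fun v hv => hb v (by simp [List.mem_cons.mp hv] <;> tauto)) (List.isChain_cons_cons.mp hc).2

theorem admissible_var {F : ℕ → Type u} (g : ℕ → ℕ) (hg : ∀ i, g i < g (i + 1)) :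
    Tm.Admissible (fun i => (Tm.var (g i) : Tm F)) := by
  constructor
  · intro i; simp [Tm.Orderly, Tm.varList]; exact List.isChain_singleton _
  · intro i; exact ⟨g i, g (i + 1), rfl, rfl, hg i⟩

/-- Shift all variables of a term up by `k`. -/
def Tm.shiftUp (k : ℕ) (t : Tm F) : Tm F := t.subst fun i => .var (k + i)

/-- Shift all variables of a term down by `k`. -/
def Tm.unshift (k : ℕ) (t : Tm F) : Tm F := t.subst fun i => .var (i - k)

theorem Tm.varList_shiftUp (k : ℕ) (t : Tm F) :
    (t.shiftUp k).varList = t.varList.map (k + ·) := by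
  rw [shiftUp, varList_subst]
  have : ∀ l : List ℕ, l.flatMap (fun i => (Tm.var (k + i) : Tm F).varList) = l.map (k + ·) := by
    intro l; induction l <;> simp_all [Tm.varList]
  exact this _

theorem Tm.varList_unshift (k : ℕ) (t : Tm F) :
    (t.unshift k).varList = t.varList.map (· - k) := by
  rw [unshift, varList_subst]
  have : ∀ l : List ℕ, l.flatMap (fun i => (Tm.var (i - k) : Tm F).varList) = l.map (· - k) := by
    intro l; induction l <;> simp_all [Tm.varList]
  exact this _

theorem Tm.Orderly.shiftUp {k : ℕ} {t : Tm F} (ht : t.Orderly) : (t.shiftUp k).Orderly := by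
  show _
  rw [Tm.Orderly, Tm.varList_shiftUp]
  rw [List.Chain', List.isChain_map]
  exact List.IsChain.imp (fun a b h => by omega) ht

theorem Tm.Orderly.unshift {k : ℕ} {t : Tm F} (ht : t.Orderly)
    (hb : ∀ v ∈ t.varList, k ≤ v) : (t.unshift k).Orderly := by
  rw [Tm.Orderly, Tm.varList_unshift]
  exact aux_chain'_map_sub hb ht

theorem Tm.realize_shiftUp (I : ∀ n, F n → (Fin n → A) → A) (c : ℕ → A) (k : ℕ) (t : Tm F) :
    (t.shiftUp k).realize I c = t.realize I fun i => c (k + i) :=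
  Tm.realize_subst I c _ t

theorem Tm.realize_unshift (I : ∀ n, F n → (Fin n → A) → A) (c : ℕ → A) {k : ℕ} {t : Tm F}
    (hb : ∀ v ∈ t.varList, k ≤ v) :
    (t.unshift k).realize I (fun j => c (k + j)) = t.realize I c := by
  rw [Tm.unshift, Tm.realize_subst]
  exact Tm.realize_congr I fun v hv => by
    show c (k + (v - k)) = c v
    have := hb v hv; congr 1; omega

theorem Tm.TermLT.unshift {k : ℕ} {s t : Tm F} (h : Tm.TermLT s t)
    (hbs : ∀ v ∈ s.varList, k ≤ v)
    (hbt : ∀ v ∈ t.varList, k ≤ v) : Tm.TermLT (s.unshift k) (t.unshift k) := by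
  obtain ⟨i, j, hi, hj, hij⟩ := h
  refine ⟨i - k, j - k, ?_, ?_, ?_⟩
  · rw [Tm.varList_unshift, List.getLast?_map, hi]; rfl
  · rw [Tm.varList_unshift, List.head?_map, hj]; rfl
  · have hjk : k ≤ j := hbt j (List.mem_of_mem_head? hj)
    have hik : k ≤ i := hbs i (List.mem_of_mem_getLast? hi)
    omega

theorem Tm.TermLT.shiftUp {k : ℕ} {s t : Tm F} (h : Tm.TermLT s t) :
    Tm.TermLT (s.shiftUp k) (t.shiftUp k) := by
  obtain ⟨i, j, hi, hj, hij⟩ := h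
  refine ⟨k + i, k + j, ?_, ?_, by omega⟩
  · rw [Tm.varList_shiftUp, List.getLast?_map, hi]; rfl
  · rw [Tm.varList_shiftUp, List.head?_map, hj]; rfl

end AuxShift
section AuxSR

variable {F : ℕ → Type u} {A : Type v} [IsEmpty (F 0)] (I : ∀ n, F n → (Fin n → A) → A)

theorem seqReduction_refl (c : ℕ → A) : SeqReduction I c c :=
  ⟨fun i => .var i, admissible_var _ (fun _ => by omega), fun _ => rfl⟩

theorem seqReduction_trans {c b a : ℕ → A} (h1 : SeqReduction I c b)
    (h2 : SeqReduction I b a) : SeqReduction I c a := by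
  obtain ⟨ts, hts, hc⟩ := h1
  obtain ⟨ss, hss, hb⟩ := h2
  refine ⟨fun i => (ts i).subst ss, hss.subst hts, fun i => ?_⟩
  rw [hc i, Tm.realize_subst]
  exact Tm.realize_congr I fun v _ => hb v

theorem seqReduction_tail (c : ℕ → A) (k : ℕ) : SeqReduction I (fun j => c (k + j)) c :=
  ⟨fun j => .var (k + j), admissible_var _ (fun _ => by omega), fun _ => rfl⟩

theorem OrdTuple.subst {n : ℕ} {t : Fin n → Tm F} {σ : ℕ → Tm F}
    (h : OrdTuple t) (hσ : Tm.Admissible σ) : OrdTuple fun i => (t i).subst σ :=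
  ⟨fun i => (h.1 i).subst hσ, fun i j hij => (h.2 i j hij).subst hσ⟩

theorem FRtuple_mono {n : ℕ} {c b : ℕ → A} (h : SeqReduction I c b) :
    FRtuple I n c ⊆ FRtuple I n b := by
  obtain ⟨ts, hts, hc⟩ := h
  rintro x ⟨t, ht, hx⟩
  refine ⟨fun i => (t i).subst ts, ht.subst hts, fun i => ?_⟩
  rw [hx i, Tm.realize_subst]
  exact Tm.realize_congr I fun v _ => hc v

theorem FRtuple_nonempty (n : ℕ) (c : ℕ → A) : (FRtuple I n c).Nonempty := by
  refine ⟨fun i => c i, fun i => (Tm.var i : Tm F), ⟨fun i => ?_, fun i j hij => ?_⟩, fun i => rfl⟩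
  · simp [Tm.Orderly, Tm.varList]; exact List.isChain_singleton _
  · exact ⟨i, j, rfl, rfl, hij⟩

/-- Strong reduction with cutoff `k`: a reduction which is the identity below `k`
and only uses variables `≥ k` from `k` onwards. -/
def SRed (k : ℕ) (c b : ℕ → A) : Prop :=
  ∃ ts : ℕ → Tm F, Tm.Admissible ts ∧ (∀ i, c i = (ts i).realize I b) ∧
    (∀ i, i < k → ts i = .var i) ∧ (∀ i, k ≤ i → ∀ v ∈ (ts i).varList, k ≤ v)

theorem SRed.toSeq {k : ℕ} {c b : ℕ → A} (h : SRed I k c b) : SeqReduction I c b :=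
  ⟨h.choose, h.choose_spec.1, h.choose_spec.2.1⟩

theorem SRed.agree {k : ℕ} {c b : ℕ → A} (h : SRed I k c b) : ∀ i < k, c i = b i := by
  obtain ⟨ts, _, hc, hpre, _⟩ := h
  intro i hi
  rw [hc i, hpre i hi]; rfl

theorem SRed.refl (k : ℕ) (c : ℕ → A) : SRed I k c c := by
  refine ⟨fun i => .var i, admissible_var _ (fun _ => by omega), fun _ => rfl,
    fun _ _ => rfl, fun i hi v hv => ?_⟩
  simp only [Tm.varList, List.mem_singleton] at hv
  omega

theorem SRed.trans {k k' : ℕ} {d c b : ℕ → A} (hkk : k ≤ k')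
    (h1 : SRed I k c b) (h2 : SRed I k' d c) : SRed I k d b := by
  obtain ⟨ts, hts, hc, hpre, hvb⟩ := h1
  obtain ⟨ts', hts', hd, hpre', hvb'⟩ := h2
  refine ⟨fun i => (ts' i).subst ts, hts.subst hts', fun i => ?_, fun i hi => ?_, fun i hi v hv => ?_⟩
  · rw [hd i, Tm.realize_subst]
    exact Tm.realize_congr I fun v _ => hc v
  · show (ts' i).subst ts = _
    rw [hpre' i (by omega)]
    show ts i = _
    exact hpre i hi
  · simp only at hv
    rw [Tm.varList_subst, List.mem_flatMap] at hv
    obtain ⟨w, hw, hv⟩ := hv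
    rcases Nat.lt_or_ge i k' with h | h
    · rw [hpre' i h] at hw
      simp only [Tm.varList, List.mem_singleton] at hw
      subst hw
      exact hvb _ hi v hv
    · have hwk : k' ≤ w := hvb' i h w hw
      rcases Nat.lt_or_ge w k with hlt | hge
      · omega
      · exact hvb w hge v hv

theorem termLT_var_shiftUp {m k : ℕ} (hmk : m < k) (t : Tm F) :
    Tm.TermLT (Tm.var m) (t.shiftUp k) := by
  refine ⟨m, k + t.varList.head (Tm.varList_ne_nil t), rfl, ?_, by omega⟩
  rw [Tm.varList_shiftUp, List.head?_map, List.head?_eq_head (Tm.varList_ne_nil t)]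
  rfl

theorem SRed.lift {k : ℕ} {e c : ℕ → A} (h : SeqReduction I e (fun j => c (k + j))) :
    SRed I k (fun i => if i < k then c i else e (i - k)) c := by
  obtain ⟨ts, hts, he⟩ := h
  refine ⟨fun i => if i < k then .var i else (ts (i - k)).shiftUp k,
    ⟨fun i => ?_, fun i => ?_⟩, fun i => ?_, fun i hi => by simp [hi], fun i hi v hv => ?_⟩
  · by_cases hik : i < k
    · simp only [hik, if_pos]
      simp [Tm.Orderly, Tm.varList]; exact List.isChain_singleton _
    · simp only [hik, if_neg, if_false]
      exact (hts.1 _).shiftUp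
  · rcases Nat.lt_or_ge (i + 1) k with h1 | h1
    · simp only [if_pos (by omega : i < k), if_pos h1]
      exact ⟨i, i + 1, rfl, rfl, by omega⟩
    · rcases Nat.lt_or_ge i k with h2 | h2
      · simp only [if_pos h2, if_neg (by omega : ¬ i + 1 < k)]
        exact termLT_var_shiftUp h2 _
      · simp only [if_neg (by omega : ¬ i < k), if_neg (by omega : ¬ i + 1 < k)]
        have : i + 1 - k = i - k + 1 := by omega
        rw [this]
        exact (hts.2 (i - k)).shiftUp
  · by_cases hik : i < k
    · simp [hik, Tm.realize]
    · simp only [hik, if_neg, if_false]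
      rw [Tm.realize_shiftUp]
      exact he (i - k)
  · simp only [if_neg (by omega : ¬ i < k)] at hv
    rw [Tm.varList_shiftUp, List.mem_map] at hv
    obtain ⟨w, _, rfl⟩ := hv
    omega

end AuxSR
section AuxSRW

variable {F : ℕ → Type u} {A : Type v} [IsEmpty (F 0)] (I : ∀ n, F n → (Fin n → A) → A)

/-- Witness form of `SRed`. -/
def SRedW (k : ℕ) (ts : ℕ → Tm F) (c b : ℕ → A) : Prop :=
  Tm.Admissible ts ∧ (∀ i, c i = (ts i).realize I b) ∧
    (∀ i, i < k → ts i = .var i) ∧ (∀ i, k ≤ i → ∀ v ∈ (ts i).varList, k ≤ v)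

theorem SRedW.var (k : ℕ) (c : ℕ → A) : SRedW I k (fun i => .var i) c c := by
  refine ⟨admissible_var _ (fun _ => by omega), fun _ => rfl, fun _ _ => rfl,
    fun i hi v hv => ?_⟩
  simp only [Tm.varList, List.mem_singleton] at hv
  omega

theorem SRedW.comp {k k' : ℕ} {ts ts' : ℕ → Tm F} {d c b : ℕ → A} (hkk : k ≤ k')
    (h1 : SRedW I k ts c b) (h2 : SRedW I k' ts' d c) :
    SRedW I k (fun i => (ts' i).subst ts) d b := by
  obtain ⟨hts, hc, hpre, hvb⟩ := h1
  obtain ⟨hts', hd, hpre', hvb'⟩ := h2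
  refine ⟨hts.subst hts', fun i => ?_, fun i hi => ?_, fun i hi v hv => ?_⟩
  · rw [hd i, Tm.realize_subst]
    exact Tm.realize_congr I fun v _ => hc v
  · show (ts' i).subst ts = _
    rw [hpre' i (by omega)]
    show ts i = _
    exact hpre i hi
  · simp only at hv
    rw [Tm.varList_subst, List.mem_flatMap] at hv
    obtain ⟨w, hw, hv⟩ := hv
    rcases Nat.lt_or_ge i k' with h | h
    · rw [hpre' i h] at hw
      simp only [Tm.varList, List.mem_singleton] at hw
      subst hw
      exact hvb _ hi v hv
    · have hwk : k' ≤ w := hvb' i h w hw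
      rcases Nat.lt_or_ge w k with hlt | hge
      · omega
      · exact hvb w hge v hv

theorem SRedW.toSRed {k : ℕ} {ts : ℕ → Tm F} {c b : ℕ → A} (h : SRedW I k ts c b) :
    SRed I k c b := ⟨ts, h⟩

theorem sRed_iff {k : ℕ} {c b : ℕ → A} : SRed I k c b ↔ ∃ ts, SRedW I k ts c b :=
  Iff.rfl

end AuxSRW
section AuxFin

variable {F : ℕ → Type u}

/-- The number of nodes of a term. -/
def Tm.size : Tm F → ℕ
  | .var _ => 1
  | .func (n := n) _ ts => 1 + ((List.finRange n).map fun i => (ts i).size).sum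

theorem Tm.size_func {n : ℕ} (f : F n) (ts : Fin n → Tm F) :
    (Tm.func f ts).size = 1 + ∑ j, (ts j).size := by
  rw [Tm.size, Fin.sum_univ_def]

theorem Tm.one_le_size (t : Tm F) : 1 ≤ t.size := by
  cases t with
  | var => exact le_refl 1
  | func f ts => rw [Tm.size_func]; omega

theorem Tm.length_varList_func {n : ℕ} (f : F n) (ts : Fin n → Tm F) :
    (Tm.func f ts).varList.length = ∑ j, (ts j).varList.length := by
  show ((List.finRange n).flatMap fun i => (ts i).varList).length = _
  rw [List.length_flatMap, Fin.sum_univ_def]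

theorem Tm.size_le_of_orderly [IsEmpty (F 0)] [IsEmpty (F 1)] :
    ∀ {t : Tm F}, t.Orderly → t.size + 1 ≤ 2 * t.varList.length := by
  intro t
  induction t with
  | var i => intro _; simp [Tm.size, Tm.varList]
  | func f ts ih =>
    intro ht
    rename_i n
    match n, f, ts, ih with
    | 0, f, _, _ => exact isEmptyElim f
    | 1, f, _, _ => exact isEmptyElim f
    | (m+2), f, ts, ih =>
      have key : ∀ j, (ts j).size + 1 ≤ 2 * (ts j).varList.length :=
        fun j => ih j (ht.sub j)
      have hsum : ∑ j, ((ts j).size + 1) ≤ ∑ j, 2 * (ts j).varList.length :=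
        Finset.sum_le_sum fun j _ => key j
      rw [Finset.sum_add_distrib] at hsum
      simp only [Finset.sum_const, Finset.card_univ, Fintype.card_fin, smul_eq_mul,
        mul_one] at hsum
      rw [Tm.size_func, Tm.length_varList_func, ← Finset.mul_sum] at *
      omega

theorem aux_finite_size [Finite (Σ n, F n)] (k : ℕ) :
    ∀ N : ℕ, {t : Tm F | t.size ≤ N ∧ ∀ v ∈ t.varList, v < k}.Finite := by
  intro N
  induction N with
  | zero =>
    convert Set.finite_empty
    ext t
    simp only [Set.mem_setOf_eq, Set.mem_empty_iff_false, iff_false, not_and]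
    intro h
    have := Tm.one_le_size t
    omega
  | succ N ihN =>
    haveI := ihN.to_subtype
    set S := {t : Tm F | t.size ≤ N ∧ ∀ v ∈ t.varList, v < k} with hS
    let f : (Fin k) ⊕ (Σ p : Σ n, F n, Fin p.1 → ↥S) → Tm F :=
      Sum.elim (fun i => .var i) (fun q => .func q.1.2 fun j => (q.2 j).val)
    apply Set.Finite.subset (Set.finite_range f)
    rintro t ⟨hsize, hvars⟩
    cases t with
    | var i =>
      have hi : i < k := hvars i (by simp [Tm.varList])
      exact ⟨Sum.inl ⟨i, hi⟩, rfl⟩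
    | func g ts =>
      rename_i m
      have hmem : ∀ j, ts j ∈ S := by
        intro j
        constructor
        · have h1 : (ts j).size ≤ ∑ i, (ts i).size :=
            Finset.single_le_sum (f := fun i : Fin m => (ts i).size)
              (fun i _ => Nat.zero_le _) (Finset.mem_univ j)
          rw [Tm.size_func] at hsize
          omega
        · intro v hv
          apply hvars v
          show v ∈ (List.finRange m).flatMap fun i => (ts i).varList
          rw [List.mem_flatMap]
          exact ⟨j, List.mem_finRange j, hv⟩
      exact ⟨Sum.inr ⟨⟨m, g⟩, fun j => ⟨ts j, hmem j⟩⟩, rfl⟩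

theorem aux_finite_orderly [IsEmpty (F 0)] [IsEmpty (F 1)] [Finite (Σ n, F n)] (k : ℕ) :
    {t : Tm F | t.Orderly ∧ ∀ v ∈ t.varList, v < k}.Finite := by
  apply Set.Finite.subset (aux_finite_size k (2 * k))
  rintro t ⟨ht, hv⟩
  refine ⟨?_, hv⟩
  have h1 := Tm.size_le_of_orderly ht
  have h2 : t.varList.length ≤ k := by
    have hnd : t.varList.Nodup := (List.isChain_iff_pairwise.mp ht).imp Nat.ne_of_lt
    classical
    have hsub : t.varList.toFinset ⊆ Finset.range k := by
      intro x hx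
      rw [Finset.mem_range]
      exact hv x (List.mem_toFinset.mp hx)
    have := Finset.card_le_card hsub
    simpa [List.toFinset_card_of_nodup hnd] using this
  omega

end AuxFin
/-- If `(A, I)` is Ramsey below `a`, then for every `b ≤ a`
and every `X ⊆ Aⁿ` there is `c ≤ b` with `[FR(c)]ⁿ_<` contained in or disjoint
from `X`. -/
theorem milliken_taylor_below {F : ℕ → Type u} {A : Type v}
    [IsEmpty (F 0)] [IsEmpty (F 1)] [Finite (Σ n, F n)]
    (I : ∀ n, F n → (Fin n → A) → A) (a : ℕ → A) (n : ℕ)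
    (hR : RamseyBelow I a) :
    ∀ b, SeqReduction I b a → ∀ X : Set (Fin n → A),
      ∃ c, SeqReduction I c b ∧ (FRtuple I n c ⊆ X ∨ FRtuple I n c ∩ X = ∅) := by
  classical
  induction n with
  | zero =>
    intro b hb X
    refine ⟨b, seqReduction_refl I b, ?_⟩
    by_cases h : (fun i : Fin 0 => i.elim0) ∈ X
    · left
      intro x _
      have : x = fun i : Fin 0 => i.elim0 := funext fun i => i.elim0
      rwa [this]
    · right
      rw [Set.eq_empty_iff_forall_notMem]
      rintro x ⟨_, hx2⟩
      have : x = fun i : Fin 0 => i.elim0 := funext fun i => i.elim0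
      rw [this] at hx2
      exact h hx2
  | succ n IH =>
    intro b hb X
    set Xval : A → Set (Fin n → A) := fun x => {y | Fin.cons x y ∈ X} with hXvaldef
    -- the one-step homogenization used inside the fusion
    let step : (ℕ → A) → (ℕ → A) → Tm F → (ℕ → A) := fun cur d s =>
      if h : SeqReduction I d a then (IH d h (Xval (s.realize I cur))).choose else d
    have step_red : ∀ cur d s, (h : SeqReduction I d a) → SeqReduction I (step cur d s) d := by
      intro cur d s h
      show SeqReduction I (if h : SeqReduction I d a then _ else d) d
      rw [dif_pos h]
      exact (IH d h (Xval (s.realize I cur))).choose_spec.1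
    have step_hom : ∀ cur d s, (h : SeqReduction I d a) →
        FRtuple I n (step cur d s) ⊆ Xval (s.realize I cur) ∨
          FRtuple I n (step cur d s) ∩ Xval (s.realize I cur) = ∅ := by
      intro cur d s h
      show FRtuple I n (if h : SeqReduction I d a then _ else d) ⊆ _ ∨
        FRtuple I n (if h : SeqReduction I d a then _ else d) ∩ _ = ∅
      rw [dif_pos h]
      exact (IH d h (Xval (s.realize I cur))).choose_spec.2
    -- the finite list of orderly terms with variables below `k`
    let termList : ℕ → List (Tm F) := fun k => (aux_finite_orderly (F := F) k).toFinset.toList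
    have termList_mem : ∀ (k : ℕ) (s : Tm F), s.Orderly → (∀ v ∈ s.varList, v < k) →
        s ∈ termList k := by
      intro k s h1 h2
      show s ∈ (aux_finite_orderly (F := F) k).toFinset.toList
      rw [Finset.mem_toList, Set.Finite.mem_toFinset]
      exact ⟨h1, h2⟩
    -- fold invariant
    have fold_inv : ∀ (cur : ℕ → A) (l : List (Tm F)) (d : ℕ → A), SeqReduction I d a →
        SeqReduction I (List.foldl (step cur) d l) d ∧
        SeqReduction I (List.foldl (step cur) d l) a ∧
        ∀ s ∈ l, FRtuple I n (List.foldl (step cur) d l) ⊆ Xval (s.realize I cur) ∨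
                 FRtuple I n (List.foldl (step cur) d l) ∩ Xval (s.realize I cur) = ∅ := by
      intro cur l
      induction l with
      | nil => intro d hd; exact ⟨seqReduction_refl I d, hd, by simp⟩
      | cons s l ihl =>
        intro d hd
        have h1 := step_red cur d s hd
        have h2 := step_hom cur d s hd
        have h3 := ihl (step cur d s) (seqReduction_trans I h1 hd)
        rw [List.foldl_cons]
        refine ⟨seqReduction_trans I h3.1 h1, h3.2.1, ?_⟩
        intro u hu
        rcases List.mem_cons.mp hu with rfl | hu
        · rcases h2 with h2 | h2
          · exact Or.inl ((FRtuple_mono I h3.1).trans h2)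
          · right
            rw [Set.eq_empty_iff_forall_notMem]
            rintro y ⟨hy1, hy2⟩
            rw [Set.eq_empty_iff_forall_notMem] at h2
            exact h2 y ⟨FRtuple_mono I h3.1 hy1, hy2⟩
        · exact h3.2.2 u hu
    -- the fusion sequence
    let next : ℕ → (ℕ → A) → (ℕ → A) := fun k cur =>
      fun i => if i < k then cur i
               else (List.foldl (step cur) (fun j => cur (k + j)) (termList k)) (i - k)
    let c : ℕ → ℕ → A := fun k => Nat.rec b (fun m cur => next m cur) k
    have c_succ : ∀ k, c (k + 1) = next k (c k) := fun _ => rfl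
    have main_inv : ∀ k, SeqReduction I (c k) a := by
      intro k
      induction k with
      | zero => exact hb
      | succ k ihk =>
        have htail : SeqReduction I (fun j => c k (k + j)) a :=
          seqReduction_trans I (seqReduction_tail I (c k) k) ihk
        have hfold := (fold_inv (c k) (termList k) _ htail).1
        have hstage : SRed I k (c (k + 1)) (c k) := SRed.lift I hfold
        exact seqReduction_trans I hstage.toSeq ihk
    have stage : ∀ k, SRed I k (c (k + 1)) (c k) := by
      intro k
      have htail : SeqReduction I (fun j => c k (k + j)) a :=
        seqReduction_trans I (seqReduction_tail I (c k) k) (main_inv k)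
      exact SRed.lift I (fold_inv (c k) (termList k) _ htail).1
    have stageW : ∀ k, ∃ ts, SRedW I k ts (c (k + 1)) (c k) := fun k => stage k
    choose σ hσ using stageW
    -- iterated composition of the stage witnesses
    let T : ℕ → ℕ → ℕ → Tm F := fun m => Nat.rec (fun i => Tm.var i)
      (fun m' T' => if m ≤ m' then (fun i => (σ m' i).subst T') else (fun i => Tm.var i))
    have T_succ_pos : ∀ m m', m ≤ m' → T m (m' + 1) = fun i => (σ m' i).subst (T m m') := by
      intro m m' h
      show (if m ≤ m' then _ else _) = _
      rw [if_pos h]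
    have T_spec : ∀ m m', m ≤ m' → SRedW I m (T m m') (c m') (c m) := by
      intro m m'
      induction m' with
      | zero =>
        intro h
        have : m = 0 := by omega
        subst this
        exact SRedW.var I 0 (c 0)
      | succ m' ih =>
        intro h
        rcases Nat.lt_or_ge m (m' + 1) with h1 | h1
        · have hm : m ≤ m' := by omega
          rw [T_succ_pos m m' hm]
          exact SRedW.comp I hm (ih hm) (hσ m')
        · have : m = m' + 1 := by omega
          subst this
          have : T (m' + 1) (m' + 1) = fun i => Tm.var i := by
            show (if m' + 1 ≤ m' then _ else _) = _
            rw [if_neg (by omega)]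
          rw [this]
          exact SRedW.var I (m' + 1) (c (m' + 1))
    have T_stab : ∀ m m₁ m₂ i, m ≤ m₁ → m₁ ≤ m₂ → i < m₁ → T m m₂ i = T m m₁ i := by
      intro m m₁ m₂
      induction m₂ with
      | zero => intro i h1 h2 h3; omega
      | succ m₂ ih =>
        intro i h1 h2 h3
        rcases Nat.lt_or_ge m₁ (m₂ + 1) with hlt | hge
        · have hm : m ≤ m₂ := by omega
          rw [T_succ_pos m m₂ hm]
          show (σ m₂ i).subst (T m m₂) = _
          rw [(hσ m₂).2.2.1 i (by omega)]
          show T m m₂ i = _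
          exact ih i h1 (by omega) h3
        · have : m₁ = m₂ + 1 := by omega
          subst this
          rfl
    -- the diagonal limit
    let cω : ℕ → A := fun i => c (i + 1) i
    have agree : ∀ m m' i, m ≤ m' → i < m → c m' i = c m i := by
      intro m m' i h hi
      rw [(T_spec m m' h).2.1 i, (T_spec m m' h).2.2.1 i hi]
      rfl
    have cω_agree : ∀ m i, i < m → cω i = c m i := by
      intro m i hi
      show c (i + 1) i = c m i
      rcases Nat.lt_or_ge m (i + 1) with hlt | hle
      · have : m = i + 1 := by omega
        rw [this]
      · exact (agree (i + 1) m i hle (by omega)).symm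
    let ρ : ℕ → ℕ → Tm F := fun m i => T m (max m (i + 1)) i
    have ρ_spec : ∀ m, SRedW I m (ρ m) cω (c m) := by
      intro m
      refine ⟨⟨fun i => ?_, fun i => ?_⟩, fun i => ?_, fun i hi => ?_, fun i hi => ?_⟩
      · exact (T_spec m (max m (i + 1)) (Nat.le_max_left _ _)).1.1 i
      · have e1 : ρ m i = T m (max m (i + 2)) i := by
          show T m (max m (i + 1)) i = _
          exact (T_stab m (max m (i + 1)) (max m (i + 2)) i (Nat.le_max_left _ _)
            (by omega) (by omega)).symm
        have e2 : ρ m (i + 1) = T m (max m (i + 2)) (i + 1) := rfl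
        show Tm.TermLT (ρ m i) (ρ m (i + 1))
        rw [e1, e2]
        exact (T_spec m (max m (i + 2)) (Nat.le_max_left _ _)).1.2 i
      · rw [cω_agree (max m (i + 1)) i (by omega)]
        exact (T_spec m (max m (i + 1)) (Nat.le_max_left _ _)).2.1 i
      · exact (T_spec m (max m (i + 1)) (Nat.le_max_left _ _)).2.2.1 i hi
      · exact (T_spec m (max m (i + 1)) (Nat.le_max_left _ _)).2.2.2 i hi
    have cω_red : ∀ m, SRed I m cω (c m) := fun m => ⟨ρ m, ρ_spec m⟩
    have cω_b : SeqReduction I cω b := (cω_red 0).toSeq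
    have cω_a : SeqReduction I cω a := seqReduction_trans I cω_b hb
    -- the homogenized tails
    let E : ℕ → ℕ → A := fun k j => c (k + 1) (k + j)
    have E_eq : ∀ k, E k = List.foldl (step (c k)) (fun j => c k (k + j)) (termList k) := by
      intro k
      funext j
      show c (k + 1) (k + j) = _
      rw [c_succ]
      show (if k + j < k then _ else List.foldl (step (c k)) _ (termList k) (k + j - k)) = _
      rw [if_neg (by omega)]
      have harith : k + j - k = j := by omega
      rw [harith]
    have E_hom : ∀ (k : ℕ) (s : Tm F), s.Orderly → (∀ v ∈ s.varList, v < k) →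
        FRtuple I n (E k) ⊆ Xval (s.realize I cω) ∨
          FRtuple I n (E k) ∩ Xval (s.realize I cω) = ∅ := by
      intro k s h1 h2
      have htail : SeqReduction I (fun j => c k (k + j)) a :=
        seqReduction_trans I (seqReduction_tail I (c k) k) (main_inv k)
      have h := (fold_inv (c k) (termList k) _ htail).2.2 s (termList_mem k s h1 h2)
      have hval : s.realize I (c k) = s.realize I cω :=
        Tm.realize_congr I fun v hv => (cω_agree k v (h2 v hv)).symm
      rw [← E_eq k, hval] at h
      exact h
    have E_mono : ∀ k k', k ≤ k' → SeqReduction I (E k') (E k) := by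
      intro k k' hkk
      rcases Nat.eq_or_lt_of_le hkk with rfl | hlt
      · exact seqReduction_refl I _
      have W := T_spec (k + 1) (k' + 1) (by omega)
      have hvb : ∀ j v, v ∈ (T (k + 1) (k' + 1) (k' + j)).varList → k ≤ v := by
        intro j v hv
        have := W.2.2.2 (k' + j) (by omega) v hv
        omega
      refine ⟨fun j => (T (k + 1) (k' + 1) (k' + j)).unshift k, ⟨fun j => ?_, fun j => ?_⟩,
        fun j => ?_⟩
      · exact (W.1.1 (k' + j)).unshift (hvb j)
      · have harith : k' + (j + 1) = (k' + j) + 1 := by omega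
        have hlt' := W.1.2 (k' + j)
        show Tm.TermLT _ ((T (k + 1) (k' + 1) (k' + (j + 1))).unshift k)
        rw [harith]
        exact hlt'.unshift (hvb j) (fun v hv => by
          have := W.2.2.2 ((k' + j) + 1) (by omega) v hv
          omega)
      · show c (k' + 1) (k' + j) = _
        rw [W.2.1 (k' + j)]
        exact (Tm.realize_unshift I (c (k + 1)) (hvb j)).symm
    -- the final one-dimensional application
    let Good : Set A := {x | ∃ (k : ℕ) (s : Tm F), s.Orderly ∧ (∀ v ∈ s.varList, v < k) ∧
      s.realize I cω = x ∧ FRtuple I n (E k) ⊆ Xval x}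
    obtain ⟨c', hc'red, hc'hom⟩ := hR cω cω_a Good
    refine ⟨c', seqReduction_trans I hc'red cω_b, ?_⟩
    -- decomposition of an arbitrary increasing (n+1)-tuple over c'
    have key : ∀ x ∈ FRtuple I (n + 1) c', ∃ (k : ℕ) (t0 : Tm F), t0.Orderly ∧
        (∀ v ∈ t0.varList, v < k) ∧ t0.realize I cω = x 0 ∧
        (fun i : Fin n => x i.succ) ∈ FRtuple I n (E k) ∧ x 0 ∈ FR I c' := by
      rintro x ⟨t, htup, hx⟩
      obtain ⟨ts', hts', hc'⟩ := hc'red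
      set t0 : Tm F := (t 0).subst ts' with ht0def
      have ht0 : t0.Orderly := (htup.1 0).subst hts'
      set k : ℕ := t0.varList.getLast (Tm.varList_ne_nil t0) + 1 with hkdef
      have hbound : ∀ v ∈ t0.varList, v < k := by
        intro v hv
        have := aux_mem_le_getLast ht0 (Tm.varList_ne_nil t0) v hv
        omega
      have hreal : ∀ s : Tm F, (s.subst ts').realize I cω = s.realize I c' := by
        intro s
        rw [Tm.realize_subst]
        exact Tm.realize_congr I fun v _ => (hc' v).symm
      have hval0 : t0.realize I cω = x 0 := by rw [ht0def, hreal, hx 0]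
      -- the remaining terms, transported over `E k`
      have hrest : (fun i : Fin n => x i.succ) ∈ FRtuple I n (E k) := by
        set u : Fin n → Tm F := fun i => (t i.succ).subst ts' with hudef
        have hu_ord : ∀ i, (u i).Orderly := fun i => (htup.1 i.succ).subst hts'
        have hu_lt : ∀ i j : Fin n, i < j → Tm.TermLT (u i) (u j) := fun i j hij =>
          (htup.2 i.succ j.succ (Fin.succ_lt_succ_iff.mpr hij)).subst hts'
        have ht0u : ∀ i, Tm.TermLT t0 (u i) := fun i =>
          (htup.2 0 i.succ (Fin.succ_pos i)).subst hts'
        have hu_bound : ∀ i, ∀ v ∈ (u i).varList, k ≤ v := by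
          intro i v hv
          have hlt := (Tm.termLT_iff t0 (u i)).mp (ht0u i)
          have hh := aux_head_le_mem (hu_ord i) (Tm.varList_ne_nil (u i)) v hv
          omega
        set w : Fin n → Tm F := fun i => (u i).subst (ρ (k + 1)) with hwdef
        have hρ := ρ_spec (k + 1)
        have hw_ord : ∀ i, (w i).Orderly := fun i => (hu_ord i).subst hρ.1
        have hw_lt : ∀ i j : Fin n, i < j → Tm.TermLT (w i) (w j) := fun i j hij =>
          (hu_lt i j hij).subst hρ.1
        have hw_bound : ∀ i, ∀ v ∈ (w i).varList, k ≤ v := by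
          intro i v hv
          rw [hwdef] at hv
          simp only at hv
          rw [Tm.varList_subst, List.mem_flatMap] at hv
          obtain ⟨z, hz, hv⟩ := hv
          have hzk : k ≤ z := hu_bound i z hz
          rcases Nat.lt_or_ge z (k + 1) with hlt | hge
          · rw [hρ.2.2.1 z hlt] at hv
            simp only [Tm.varList, List.mem_singleton] at hv
            omega
          · have := hρ.2.2.2 z hge v hv
            omega
        have hw_val : ∀ i, (w i).realize I (c (k + 1)) = (u i).realize I cω := by
          intro i
          rw [hwdef]
          simp only
          rw [Tm.realize_subst]
          exact (Tm.realize_congr I fun v _ => hρ.2.1 v).symm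
        refine ⟨fun i => (w i).unshift k, ⟨fun i => ?_, fun i j hij => ?_⟩, fun i => ?_⟩
        · exact (hw_ord i).unshift (hw_bound i)
        · exact (hw_lt i j hij).unshift (hw_bound i) (hw_bound j)
        · show x i.succ = ((w i).unshift k).realize I (fun j => c (k + 1) (k + j))
          rw [Tm.realize_unshift I (c (k + 1)) (hw_bound i), hw_val i, hudef]
          simp only
          rw [hreal, hx i.succ]
      exact ⟨k, t0, ht0, hbound, hval0, hrest, ⟨t 0, htup.1 0, hx 0⟩⟩
    have cons_eq : ∀ x : Fin (n + 1) → A, Fin.cons (x 0) (fun i : Fin n => x i.succ) = x :=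
      fun x => Fin.cons_self_tail x
    rcases hc'hom with hsub | hdis
    · left
      rintro x hxF
      obtain ⟨k, t0, ht0, hb0, hval0, hrest, hx0⟩ := key x hxF
      obtain ⟨k₂, s₂, hs₂o, hs₂b, hs₂v, hs₂hom⟩ := hsub hx0
      have hh := E_hom k t0 ht0 hb0
      rw [hval0] at hh
      have hsubk : FRtuple I n (E k) ⊆ Xval (x 0) := by
        rcases hh with h | h
        · exact h
        · exfalso
          rw [Set.eq_empty_iff_forall_notMem] at h
          rcases Nat.le_total k k₂ with hle | hle
          · obtain ⟨y, hy⟩ := FRtuple_nonempty I n (E k₂)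
            exact h y ⟨FRtuple_mono I (E_mono k k₂ hle) hy, hs₂hom hy⟩
          · obtain ⟨y, hy⟩ := FRtuple_nonempty I n (E k)
            exact h y ⟨hy, hs₂hom (FRtuple_mono I (E_mono k₂ k hle) hy)⟩
      have hmem : (fun i : Fin n => x i.succ) ∈ Xval (x 0) := hsubk hrest
      have : Fin.cons (x 0) (fun i : Fin n => x i.succ) ∈ X := hmem
      rwa [cons_eq x] at this
    · right
      rw [Set.eq_empty_iff_forall_notMem]
      rintro x ⟨hxF, hxX⟩
      obtain ⟨k, t0, ht0, hb0, hval0, hrest, hx0⟩ := key x hxF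
      have hnot : x 0 ∉ Good := by
        intro hg
        rw [Set.eq_empty_iff_forall_notMem] at hdis
        exact hdis (x 0) ⟨hx0, hg⟩
      have hh := E_hom k t0 ht0 hb0
      rw [hval0] at hh
      rcases hh with h | h
      · exact hnot ⟨k, t0, ht0, hb0, hval0, h⟩
      · rw [Set.eq_empty_iff_forall_notMem] at h
        apply h _ ⟨hrest, ?_⟩
        show Fin.cons (x 0) (fun i : Fin n => x i.succ) ∈ X
        rw [cons_eq x]
        exact hxX
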